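/- The only solutions of the Kepler-Heisenberg system contained in the xy-plane are lines through the origin: if c is a solution with z(t) = 0 for all t in its interval of definition, then x(t)·ẏ(t) − y(t)·ẋ(t) = 0 for all t, and there exists (a, b) ∈ ℝ² with (a, b) ≠ (0, 0) such that a·x(t) + b·y(t) = 0 for all t. -/

import Mathlib

/-- `P_X = p_x - (1/2) y p_z`, where phase space coordinates are
`(x, y, z, p_x, p_y, p_z) = (p 0, p 1, p 2, p 3, p 4, p 5)`. -/
noncomputable def PX (p : Fin 6 → ℝ) : ℝ := p 3 - (1/2) * p 1 * p 5

/-- `P_Y = p_y + (1/2) x p_z`. -/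
noncomputable def PY (p : Fin 6 → ℝ) : ℝ := p 4 + (1/2) * p 0 * p 5

/-- `Q = (x² + y²)² + 16 z²`. -/
noncomputable def Qf (p : Fin 6 → ℝ) : ℝ := ((p 0)^2 + (p 1)^2)^2 + 16 * (p 2)^2

/-- The Kepler–Heisenberg Hamiltonian `H = (1/2)(P_X² + P_Y²) - (1/(8π)) Q^{-1/2}`. -/
noncomputable def Ham (p : Fin 6 → ℝ) : ℝ :=
  (1/2) * ((PX p)^2 + (PY p)^2) - (1/(8*Real.pi)) * (Qf p) ^ (-(1/2) : ℝ)

/-- A solution of the Kepler–Heisenberg system: a differentiable curve on an open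
interval (open preconnected set) `I`, whose position component never vanishes, and
which satisfies Hamilton's equations for `Ham`. -/
def IsSolutionOn (c : ℝ → Fin 6 → ℝ) (I : Set ℝ) : Prop :=
  IsOpen I ∧ IsPreconnected I ∧
  ∀ t ∈ I,
    (¬ (c t 0 = 0 ∧ c t 1 = 0 ∧ c t 2 = 0)) ∧
    HasDerivAt (fun τ => c τ 0) (fderiv ℝ Ham (c t) (Pi.single 3 1)) t ∧
    HasDerivAt (fun τ => c τ 1) (fderiv ℝ Ham (c t) (Pi.single 4 1)) t ∧
    HasDerivAt (fun τ => c τ 2) (fderiv ℝ Ham (c t) (Pi.single 5 1)) t ∧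
    HasDerivAt (fun τ => c τ 3) (-(fderiv ℝ Ham (c t) (Pi.single 0 1))) t ∧
    HasDerivAt (fun τ => c τ 4) (-(fderiv ℝ Ham (c t) (Pi.single 1 1))) t ∧
    HasDerivAt (fun τ => c τ 5) (-(fderiv ℝ Ham (c t) (Pi.single 2 1))) t

lemma pow2 {f : (Fin 6 → ℝ) → ℝ} {L : (Fin 6 → ℝ) →L[ℝ] ℝ} {q : Fin 6 → ℝ} (hf : HasFDerivAt f L q) :
    HasFDerivAt (fun p => f p ^ 2) ((2 * f q) • L) q := by
  simpa [Function.comp_def] using (hasDerivAt_pow 2 (f q)).comp_hasFDerivAt q hf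

open ContinuousLinearMap in
lemma ham_fderiv (q : Fin 6 → ℝ) (hq : Qf q ≠ 0) :
    fderiv ℝ Ham q (Pi.single 3 1) = PX q ∧
    fderiv ℝ Ham q (Pi.single 4 1) = PY q ∧
    fderiv ℝ Ham q (Pi.single 5 1) = (1/2) * (q 0 * PY q - q 1 * PX q) := by
  have h0 : HasFDerivAt (fun p : Fin 6 → ℝ => p 0) (proj (R := ℝ) (φ := fun _ : Fin 6 => ℝ) 0) q := by
    exact (proj (R := ℝ) (φ := fun _ : Fin 6 => ℝ) 0).hasFDerivAt
  have h1 : HasFDerivAt (fun p : Fin 6 → ℝ => p 1) (proj (R := ℝ) (φ := fun _ : Fin 6 => ℝ) 1) q := by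
    exact (proj (R := ℝ) (φ := fun _ : Fin 6 => ℝ) 1).hasFDerivAt
  have h2 : HasFDerivAt (fun p : Fin 6 → ℝ => p 2) (proj (R := ℝ) (φ := fun _ : Fin 6 => ℝ) 2) q := by
    exact (proj (R := ℝ) (φ := fun _ : Fin 6 => ℝ) 2).hasFDerivAt
  have h3 : HasFDerivAt (fun p : Fin 6 → ℝ => p 3) (proj (R := ℝ) (φ := fun _ : Fin 6 => ℝ) 3) q := by
    exact (proj (R := ℝ) (φ := fun _ : Fin 6 => ℝ) 3).hasFDerivAt
  have h4 : HasFDerivAt (fun p : Fin 6 → ℝ => p 4) (proj (R := ℝ) (φ := fun _ : Fin 6 => ℝ) 4) q := by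
    exact (proj (R := ℝ) (φ := fun _ : Fin 6 => ℝ) 4).hasFDerivAt
  have h5 : HasFDerivAt (fun p : Fin 6 → ℝ => p 5) (proj (R := ℝ) (φ := fun _ : Fin 6 => ℝ) 5) q := by
    exact (proj (R := ℝ) (φ := fun _ : Fin 6 => ℝ) 5).hasFDerivAt
  have hpx : HasFDerivAt PX _ q := h3.sub ((h1.const_mul ((1:ℝ)/2)).mul h5)
  have hpy : HasFDerivAt PY _ q := h4.add ((h0.const_mul ((1:ℝ)/2)).mul h5)
  have hQ : HasFDerivAt Qf _ q := (pow2 ((pow2 h0).add (pow2 h1))).add ((pow2 h2).const_mul 16)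
  have hr := (Real.hasDerivAt_rpow_const (p := (-(1/2):ℝ)) (Or.inl hq)).comp_hasFDerivAt q hQ
  have hH : HasFDerivAt Ham _ q :=
    (((pow2 hpx).add (pow2 hpy)).const_mul ((1:ℝ)/2)).sub (hr.const_mul (1/(8*Real.pi)))
  refine ⟨?_, ?_, ?_⟩ <;> rw [hH.fderiv] <;>
    simp [PX, PY, Pi.single_apply] <;> ring

/-- The only solutions of the Kepler–Heisenberg system contained in the `xy`-plane are
lines through the origin: `x ẏ - y ẋ = 0` along the solution, and the projection to the
`xy`-plane lies on a line `a x + b y = 0` through the origin. -/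
theorem kh_planar_solutions_are_lines (c : ℝ → Fin 6 → ℝ) (I : Set ℝ)
    (hc : IsSolutionOn c I) (hz : ∀ t ∈ I, c t 2 = 0) :
    (∀ t ∈ I,
      c t 0 * deriv (fun τ => c τ 1) t - c t 1 * deriv (fun τ => c τ 0) t = 0) ∧
    ∃ a b : ℝ, (a, b) ≠ (0, 0) ∧ ∀ t ∈ I, a * c t 0 + b * c t 1 = 0 := by
  obtain ⟨hI, hIc, hsol⟩ := hc
  have key : ∀ t ∈ I, HasDerivAt (fun τ => c τ 0) (PX (c t)) t ∧
      HasDerivAt (fun τ => c τ 1) (PY (c t)) t ∧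
      c t 0 * PY (c t) - c t 1 * PX (c t) = 0 ∧ ¬(c t 0 = 0 ∧ c t 1 = 0) := by
    intro t ht
    obtain ⟨hpos, hx, hy, hz', -⟩ := hsol t ht
    have h2 := hz t ht
    have hne : ¬(c t 0 = 0 ∧ c t 1 = 0) := fun ⟨ha, hb⟩ => hpos ⟨ha, hb, h2⟩
    have hs : 0 < (c t 0)^2 + (c t 1)^2 := by
      rcases not_and_or.mp hne with h | h
      · positivity
      · positivity
    have hq : Qf (c t) ≠ 0 := by
      unfold Qf; rw [h2]; positivity
    obtain ⟨e3, e4, e5⟩ := ham_fderiv (c t) hq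
    rw [e3] at hx; rw [e4] at hy; rw [e5] at hz'
    have hz0 : HasDerivAt (fun τ => c τ 2) 0 t := by
      refine (hasDerivAt_const t (0:ℝ)).congr_of_eventuallyEq ?_
      filter_upwards [hI.mem_nhds ht] with τ hτ
      exact hz τ hτ
    have hcross : (1:ℝ)/2 * (c t 0 * PY (c t) - c t 1 * PX (c t)) = 0 :=
      (hz0.unique hz').symm
    exact ⟨hx, hy, by linarith, hne⟩
  constructor
  · intro t ht
    obtain ⟨hx, hy, hcross, -⟩ := key t ht
    rw [hx.deriv, hy.deriv]
    exact hcross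
  · by_cases hne : ∃ t₀, t₀ ∈ I
    · obtain ⟨t₀, ht₀⟩ := hne
      set a : ℝ := c t₀ 1 with ha
      set b : ℝ := -(c t₀ 0) with hb
      set v : ℝ → ℝ := fun t => (a * c t 0 + b * c t 1) / Real.sqrt ((c t 0)^2 + (c t 1)^2) with hv
      have hvder : ∀ t ∈ I, HasDerivAt v 0 t := by
        intro t ht
        obtain ⟨hx, hy, hcross, hne0⟩ := key t ht
        have hs : 0 < (c t 0)^2 + (c t 1)^2 := by
          rcases not_and_or.mp hne0 with h | h
          · positivity
          · positivity
        have hrne : Real.sqrt ((c t 0)^2 + (c t 1)^2) ≠ 0 :=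
          (Real.sqrt_pos.mpr hs).ne'
        have hrr : Real.sqrt ((c t 0)^2 + (c t 1)^2) * Real.sqrt ((c t 0)^2 + (c t 1)^2)
            = (c t 0)^2 + (c t 1)^2 := Real.mul_self_sqrt hs.le
        have hN : HasDerivAt (fun τ => a * c τ 0 + b * c τ 1)
            (a * PX (c t) + b * PY (c t)) t := (hx.const_mul a).add (hy.const_mul b)
        have hS : HasDerivAt (fun τ => (c τ 0)^2 + (c τ 1)^2)
            (2 * c t 0 * PX (c t) + 2 * c t 1 * PY (c t)) t := by
          have := ((hx.pow 2).add (hy.pow 2))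
          simpa [mul_comm, mul_assoc, mul_left_comm, Pi.pow_def, Pi.add_def] using this
        have hR : HasDerivAt (fun τ => Real.sqrt ((c τ 0)^2 + (c τ 1)^2))
            (1 / (2 * Real.sqrt ((c t 0)^2 + (c t 1)^2)) *
              (2 * c t 0 * PX (c t) + 2 * c t 1 * PY (c t))) t := by
          exact (Real.hasDerivAt_sqrt hs.ne').comp t hS
        have hq := hN.div hR hrne
        refine hq.congr_deriv (Eq.symm ?_)
        rw [eq_comm, div_eq_zero_iff]
        left
        have expand : (a * PX (c t) + b * PY (c t)) * Real.sqrt ((c t 0)^2 + (c t 1)^2) -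
            (a * c t 0 + b * c t 1) *
              (1 / (2 * Real.sqrt ((c t 0)^2 + (c t 1)^2)) *
                (2 * c t 0 * PX (c t) + 2 * c t 1 * PY (c t))) =
            ((a * PX (c t) + b * PY (c t)) * ((c t 0)^2 + (c t 1)^2) -
              (a * c t 0 + b * c t 1) * (c t 0 * PX (c t) + c t 1 * PY (c t))) /
              Real.sqrt ((c t 0)^2 + (c t 1)^2) := by
          field_simp
          linear_combination (a * PX (c t) + b * PY (c t)) * hrr
        rw [expand, div_eq_zero_iff]
        left
        linear_combination (b * c t 0 - a * c t 1) * hcross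
      have hconst : ∀ t ∈ I, v t = v t₀ := by
        intro t ht
        refine hIc.convex.is_const_of_fderivWithin_eq_zero
          (fun s hs => ((hvder s hs).differentiableAt).differentiableWithinAt)
          (fun s hs => ?_) ht ht₀
        rw [fderivWithin_of_isOpen hI hs, (hvder s hs).hasFDerivAt.fderiv]
        ext u; simp
      refine ⟨a, b, ?_, ?_⟩
      · obtain ⟨-, -, -, hne0⟩ := key t₀ ht₀
        intro h
        rw [Prod.mk.injEq] at h
        obtain ⟨h1, h2⟩ := h
        rw [ha] at h1
        rw [hb, neg_eq_zero] at h2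
        exact hne0 ⟨h2, h1⟩
      · intro t ht
        obtain ⟨-, -, -, hne0⟩ := key t ht
        have hs : 0 < (c t 0)^2 + (c t 1)^2 := by
          rcases not_and_or.mp hne0 with h | h
          · positivity
          · positivity
        have hrne : Real.sqrt ((c t 0)^2 + (c t 1)^2) ≠ 0 := (Real.sqrt_pos.mpr hs).ne'
        have h1 : v t = 0 := by
          rw [hconst t ht]
          simp only [hv, ha, hb]
          rw [div_eq_zero_iff]
          left; ring
        have := h1
        rw [hv, div_eq_zero_iff] at this
        rcases this with h | h
        · exact h
        · exact absurd h hrne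
    · exact ⟨1, 0, by simp, fun t ht => absurd ⟨t, ht⟩ hne⟩
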